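/- Let Λ be a pre-action on (K, A) with cofactor Ω, and let Ξ be the associated 3-cochain. For composable arrows ξ, η, ζ of K and an object a of A define: Ξ₁(ξ,η,ζ,a) := Ω(ξη,ζ,a)·Ω(ξ,ηζ,Λ_ξ⁻¹Λ_{ηζ}⁻¹Λ_ζΛ_{ξη}(a))⁻¹·Λ_ξ⁻¹(Ω(η,ζ,Λ_η⁻¹Λ_{ξη}(a)))⁻¹·Ω(ξ,η,Λ_ξ⁻¹Λ_η⁻¹Λ_{ξη}(a)); Ξ₂(ξ,η,ζ,a) := Ω(ξ,ηζ,Λ_ξ⁻¹Λ_{ηζ}⁻¹Λ_{ξηζ}(a))⁻¹·Λ_ξ⁻¹(Ω(η,ζ,Λ_η⁻¹Λ_ζ⁻¹Λ_{ξηζ}(a)))⁻¹·Ω(ξ,η,Λ_ξ⁻¹Λ_η⁻¹Λ_ζ⁻¹Λ_{ξηζ}(a))·Ω(ξη,ζ,Λ_{ξη}⁻¹Λ_ζ⁻¹Λ_{ξηζ}(a)); Ξ₃(ξ,η,ζ,a) := Λ_ξ⁻¹(Ω(η,ζ,Λ_η⁻¹Λ_ζ⁻¹Λ_{ηζ}Λ_ξ(a)))⁻¹·Ω(ξ,η,Λ_ξ⁻¹Λ_η⁻¹Λ_ζ⁻¹Λ_{ηζ}Λ_ξ(a))·Ω(ξη,ζ,Λ_{ξη}⁻¹Λ_ζ⁻¹Λ_{ηζ}Λ_ξ(a))·Ω(ξ,ηζ,a)⁻¹.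 Then Ξ(ξ,η,ζ,a) = Ξ₁(ξ,η,ζ,a) = Ξ₂(ξ,η,ζ,a) = Ξ₃(ξ,η,ζ,a) for all composable ξ, η, ζ and all objects a. -/

import Mathlib

open CategoryTheory
universe v u v' u'
variable {K : Type u} [Groupoid K] {A : Type u'} [Groupoid A]
structure PreAction (K : Type u) (A : Type u') [Groupoid K] [Groupoid A] where
  map : ∀ {x y : K}, (x ⟶ y) → (A ⥤ A)
  inv : ∀ {x y : K}, (x ⟶ y) → (A ⥤ A)
  comp_inv : ∀ {x y : K} (ξ : x ⟶ y), map ξ ⋙ inv ξ = 𝟭 A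
  inv_comp : ∀ {x y : K} (ξ : x ⟶ y), inv ξ ⋙ map ξ = 𝟭 A
  map_id : ∀ x : K, map (𝟙 x) = 𝟭 A
namespace PreAction
variable (P : PreAction K A)
theorem inv_id (x : K) : P.inv (𝟙 x) = 𝟭 A := by
  have h := P.inv_comp (𝟙 x); rw [P.map_id, Functor.comp_id] at h; exact h
@[simp] theorem inv_map_obj {x y : K} (ξ : x ⟶ y) (a : A) :
    (P.inv ξ).obj ((P.map ξ).obj a) = a := Functor.congr_obj (P.comp_inv ξ) a
@[simp] theorem map_inv_obj {x y : K} (ξ : x ⟶ y) (a : A) :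
    (P.map ξ).obj ((P.inv ξ).obj a) = a := Functor.congr_obj (P.inv_comp ξ) a
@[simp] theorem map_id_obj (x : K) (a : A) : (P.map (𝟙 x)).obj a = a :=
  Functor.congr_obj (P.map_id x) a
@[simp] theorem inv_id_obj (x : K) (a : A) : (P.inv (𝟙 x)).obj a = a :=
  Functor.congr_obj (P.inv_id x) a
theorem cof_obj_id_left {x y : K} (η : x ⟶ y) (a : A) :
    a = (P.inv (𝟙 x ≫ η)).obj ((P.map η).obj ((P.map (𝟙 x)).obj a)) := by
  rw [Category.id_comp]; simp
theorem cof_obj_id_right {x y : K} (ξ : x ⟶ y) (a : A) :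
    a = (P.inv (ξ ≫ 𝟙 y)).obj ((P.map (𝟙 y)).obj ((P.map ξ).obj a)) := by
  rw [Category.comp_id]; simp
end PreAction
structure Cofactor (P : PreAction K A) where
  Ω : ∀ {x y z : K} (ξ : x ⟶ y) (η : y ⟶ z) (a : A),
      a ⟶ (P.inv (ξ ≫ η)).obj ((P.map η).obj ((P.map ξ).obj a))
  naturality : ∀ {x y z : K} (ξ : x ⟶ y) (η : y ⟶ z) {a b : A} (h : a ⟶ b),
      h ≫ Ω ξ η b = Ω ξ η a ≫ (P.inv (ξ ≫ η)).map ((P.map η).map ((P.map ξ).map h))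
  id_left : ∀ {x y : K} (η : x ⟶ y) (a : A),
      Ω (𝟙 x) η a = eqToHom (P.cof_obj_id_left η a)
  id_right : ∀ {x y : K} (ξ : x ⟶ y) (a : A),
      Ω ξ (𝟙 y) a = eqToHom (P.cof_obj_id_right ξ a)
def IsGenCocycle {P : PreAction K A} (C : Cofactor P) : Prop :=
  ∀ {x y z w : K} (ξ : x ⟶ y) (η : y ⟶ z) (ζ : z ⟶ w) (a : A),
    C.Ω ξ η a ≫
      C.Ω (ξ ≫ η) ζ ((P.inv (ξ ≫ η)).obj ((P.map η).obj ((P.map ξ).obj a))) ≫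
      eqToHom (by simp) =
    eqToHom (by simp) ≫
      (P.inv ξ).map (C.Ω η ζ ((P.map ξ).obj a)) ≫
      C.Ω ξ (η ≫ ζ)
        ((P.inv ξ).obj ((P.inv (η ≫ ζ)).obj ((P.map ζ).obj ((P.map η).obj ((P.map ξ).obj a)))))

variable {P : PreAction K A} (C : Cofactor P)


/-- The 3-cochain `Ξ` associated to a pre-action with cofactor `(Λ, Ω)`:
`Ξ(ξ,η,ζ,a) = Ω(ξ,η,a)·Ω(ξη,ζ,Λ_{ξη}⁻¹Λ_ηΛ_ξ(a))·Ω(ξ,ηζ,Λ_ξ⁻¹Λ_{ηζ}⁻¹Λ_ζΛ_ηΛ_ξ(a))⁻¹·Λ_ξ⁻¹(Ω(η,ζ,Λ_ξ(a)))⁻¹`,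
an automorphism of `a` (strict identifications of objects recorded by `eqToHom`). -/
def Xi {P : PreAction K A} (C : Cofactor P) {x y z w : K}
    (ξ : x ⟶ y) (η : y ⟶ z) (ζ : z ⟶ w) (a : A) : a ⟶ a :=
  C.Ω ξ η a ≫
    C.Ω (ξ ≫ η) ζ ((P.inv (ξ ≫ η)).obj ((P.map η).obj ((P.map ξ).obj a))) ≫
    eqToHom (by simp) ≫
    Groupoid.inv (C.Ω ξ (η ≫ ζ)
      ((P.inv ξ).obj ((P.inv (η ≫ ζ)).obj
        ((P.map ζ).obj ((P.map η).obj ((P.map ξ).obj a)))))) ≫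
    Groupoid.inv ((P.inv ξ).map (C.Ω η ζ ((P.map ξ).obj a))) ≫
    eqToHom (by simp)

/-- `Ξ₁(ξ,η,ζ,a) = Ω(ξη,ζ,a)·Ω(ξ,ηζ,Λ_ξ⁻¹Λ_{ηζ}⁻¹Λ_ζΛ_{ξη}(a))⁻¹·Λ_ξ⁻¹(Ω(η,ζ,Λ_η⁻¹Λ_{ξη}(a)))⁻¹·Ω(ξ,η,Λ_ξ⁻¹Λ_η⁻¹Λ_{ξη}(a))`. -/
def Xi₁ {P : PreAction K A} (C : Cofactor P) {x y z w : K}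
    (ξ : x ⟶ y) (η : y ⟶ z) (ζ : z ⟶ w) (a : A) : a ⟶ a :=
  C.Ω (ξ ≫ η) ζ a ≫
    eqToHom (by simp) ≫
    Groupoid.inv (C.Ω ξ (η ≫ ζ)
      ((P.inv ξ).obj ((P.inv (η ≫ ζ)).obj
        ((P.map ζ).obj ((P.map (ξ ≫ η)).obj a))))) ≫
    eqToHom (by simp) ≫
    Groupoid.inv ((P.inv ξ).map (C.Ω η ζ
      ((P.inv η).obj ((P.map (ξ ≫ η)).obj a)))) ≫
    C.Ω ξ η ((P.inv ξ).obj ((P.inv η).obj ((P.map (ξ ≫ η)).obj a))) ≫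
    eqToHom (by simp)

/-- `Ξ₂(ξ,η,ζ,a) = Ω(ξ,ηζ,Λ_ξ⁻¹Λ_{ηζ}⁻¹Λ_{ξηζ}(a))⁻¹·Λ_ξ⁻¹(Ω(η,ζ,Λ_η⁻¹Λ_ζ⁻¹Λ_{ξηζ}(a)))⁻¹·Ω(ξ,η,Λ_ξ⁻¹Λ_η⁻¹Λ_ζ⁻¹Λ_{ξηζ}(a))·Ω(ξη,ζ,Λ_{ξη}⁻¹Λ_ζ⁻¹Λ_{ξηζ}(a))`. -/
def Xi₂ {P : PreAction K A} (C : Cofactor P) {x y z w : K}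
    (ξ : x ⟶ y) (η : y ⟶ z) (ζ : z ⟶ w) (a : A) : a ⟶ a :=
  eqToHom (by simp) ≫
    Groupoid.inv (C.Ω ξ (η ≫ ζ)
      ((P.inv ξ).obj ((P.inv (η ≫ ζ)).obj ((P.map (ξ ≫ η ≫ ζ)).obj a)))) ≫
    eqToHom (by simp) ≫
    Groupoid.inv ((P.inv ξ).map (C.Ω η ζ
      ((P.inv η).obj ((P.inv ζ).obj ((P.map (ξ ≫ η ≫ ζ)).obj a))))) ≫
    C.Ω ξ η ((P.inv ξ).obj ((P.inv η).obj ((P.inv ζ).obj ((P.map (ξ ≫ η ≫ ζ)).obj a)))) ≫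
    eqToHom (by simp) ≫
    C.Ω (ξ ≫ η) ζ ((P.inv (ξ ≫ η)).obj ((P.inv ζ).obj ((P.map (ξ ≫ η ≫ ζ)).obj a))) ≫
    eqToHom (by simp)

/-- `Ξ₃(ξ,η,ζ,a) = Λ_ξ⁻¹(Ω(η,ζ,Λ_η⁻¹Λ_ζ⁻¹Λ_{ηζ}Λ_ξ(a)))⁻¹·Ω(ξ,η,Λ_ξ⁻¹Λ_η⁻¹Λ_ζ⁻¹Λ_{ηζ}Λ_ξ(a))·Ω(ξη,ζ,Λ_{ξη}⁻¹Λ_ζ⁻¹Λ_{ηζ}Λ_ξ(a))·Ω(ξ,ηζ,a)⁻¹`. -/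
def Xi₃ {P : PreAction K A} (C : Cofactor P) {x y z w : K}
    (ξ : x ⟶ y) (η : y ⟶ z) (ζ : z ⟶ w) (a : A) : a ⟶ a :=
  eqToHom (by simp) ≫
    Groupoid.inv ((P.inv ξ).map (C.Ω η ζ
      ((P.inv η).obj ((P.inv ζ).obj ((P.map (η ≫ ζ)).obj ((P.map ξ).obj a)))))) ≫
    C.Ω ξ η ((P.inv ξ).obj ((P.inv η).obj ((P.inv ζ).obj
      ((P.map (η ≫ ζ)).obj ((P.map ξ).obj a))))) ≫
    eqToHom (by simp) ≫
    C.Ω (ξ ≫ η) ζ ((P.inv (ξ ≫ η)).obj ((P.inv ζ).obj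
      ((P.map (η ≫ ζ)).obj ((P.map ξ).obj a)))) ≫
    eqToHom (by simp) ≫
    Groupoid.inv (C.Ω ξ (η ≫ ζ) a)

namespace XiAux
open CategoryTheory

variable {K : Type u} [Groupoid K] {A : Type u'} [Groupoid A]
variable {P : PreAction K A} (C : Cofactor P)

lemma omega_congr {x y z : K} (ξ : x ⟶ y) (η : y ⟶ z) {a b : A} (h : a = b) :
    C.Ω ξ η a = eqToHom h ≫ C.Ω ξ η b ≫ eqToHom (by rw [h]) := by
  subst h; simp

def omegaNat {x y z : K} (ξ : x ⟶ y) (η : y ⟶ z) :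
    𝟭 A ⟶ (P.map ξ ⋙ P.map η ⋙ P.inv (ξ ≫ η)) where
  app a := C.Ω ξ η a
  naturality a b h := by simpa using C.naturality ξ η h

section
variable {x y z w : K} (ξ : x ⟶ y) (η : y ⟶ z) (ζ : z ⟶ w)

abbrev F1 : A ⥤ A := P.map ξ ⋙ P.map η ⋙ P.inv (ξ ≫ η)
abbrev F2 : A ⥤ A := P.map (ξ ≫ η) ⋙ P.map ζ ⋙ P.inv ((ξ ≫ η) ≫ ζ)
abbrev F3 : A ⥤ A := P.map ξ ⋙ P.map (η ≫ ζ) ⋙ P.inv (ξ ≫ η ≫ ζ)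
abbrev Q : A ⥤ A :=
  P.map ξ ⋙ P.map η ⋙ P.map ζ ⋙ P.inv (η ≫ ζ) ⋙ P.inv ξ

lemma inv_comp_assoc {x y : K} (ξ : x ⟶ y) (G : A ⥤ A) :
    P.inv ξ ⋙ P.map ξ ⋙ G = G := by
  rw [← Functor.assoc, P.inv_comp, Functor.id_comp]

lemma comp_inv_assoc {x y : K} (ξ : x ⟶ y) (G : A ⥤ A) :
    P.map ξ ⋙ P.inv ξ ⋙ G = G := by
  rw [← Functor.assoc, P.comp_inv, Functor.id_comp]

lemma keyEq : F1 (P := P) ξ η ⋙ F2 (P := P) ξ η ζ = Q (P := P) ξ η ζ ⋙ F3 (P := P) ξ η ζ := by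
  simp only [Functor.assoc, inv_comp_assoc, comp_inv_assoc, Category.assoc]

instance {F G : A ⥤ A} (τ : F ⟶ G) : IsIso τ :=
  NatIso.isIso_of_isIso_app τ

def u2 : F1 (P := P) ξ η ⟶ F1 (P := P) ξ η ⋙ F2 (P := P) ξ η ζ :=
  (Functor.rightUnitor _).inv ≫ Functor.whiskerLeft _ (omegaNat C (ξ ≫ η) ζ)

noncomputable def u4 : Q (P := P) ξ η ζ ⋙ F3 (P := P) ξ η ζ ⟶ Q (P := P) ξ η ζ :=
  CategoryTheory.inv ((Functor.rightUnitor _).inv ≫ Functor.whiskerLeft _ (omegaNat C ξ (η ≫ ζ)))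

noncomputable def u5 : Q (P := P) ξ η ζ ⟶ P.map ξ ⋙ P.inv ξ :=
  CategoryTheory.inv (Functor.whiskerRight (Functor.whiskerLeft (P.map ξ) (omegaNat C η ζ)) (P.inv ξ))

noncomputable def B1 : F1 (P := P) ξ η ⟶ 𝟭 A :=
  u2 C ξ η ζ ≫ eqToHom (keyEq ξ η ζ) ≫ u4 C ξ η ζ ≫ u5 C ξ η ζ ≫ eqToHom (P.comp_inv ξ)

noncomputable def T : 𝟭 A ⟶ 𝟭 A :=
  omegaNat C ξ η ≫ B1 C ξ η ζ

lemma Xi_eq_T (a : A) : Xi C ξ η ζ a = (T C ξ η ζ).app a := by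
  simp only [T, B1, u2, u4, u5, Xi, NatTrans.comp_app, eqToHom_app, Functor.whiskerLeft_app,
    Functor.whiskerRight_app, Functor.rightUnitor_inv_app, NatIso.isIso_inv_app, Category.id_comp,
    Groupoid.inv_eq_inv, omegaNat]
  rfl

lemma book1 (a : A)
    (h : a = (F1 (P := P) ξ η).obj
        ((P.inv ξ).obj ((P.inv η).obj ((P.map (ξ ≫ η)).obj a)))) :
    Xi₁ C ξ η ζ a =
      eqToHom h ≫
        ((B1 C ξ η ζ).app ((P.inv ξ).obj ((P.inv η).obj ((P.map (ξ ≫ η)).obj a))) ≫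
          (omegaNat C ξ η).app ((P.inv ξ).obj ((P.inv η).obj ((P.map (ξ ≫ η)).obj a)))) ≫
        eqToHom h.symm := by
  simp only [B1, u2, u4, u5, NatTrans.comp_app, eqToHom_app, Functor.whiskerLeft_app, Functor.whiskerRight_app,
    Functor.rightUnitor_inv_app, NatIso.isIso_inv_app, Category.id_comp, omegaNat, Xi₁,
    Groupoid.inv_eq_inv, Functor.comp_obj, Functor.id_obj]
  rw [omega_congr C (ξ ≫ η) ζ
      (show a = (P.inv (ξ ≫ η)).obj ((P.map η).obj ((P.map ξ).obj
        ((P.inv ξ).obj ((P.inv η).obj ((P.map (ξ ≫ η)).obj a))))) by simp),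
    omega_congr C ξ (η ≫ ζ)
      (show (P.inv ξ).obj ((P.inv (η ≫ ζ)).obj ((P.map ζ).obj ((P.map (ξ ≫ η)).obj a))) =
        (P.inv ξ).obj ((P.inv (η ≫ ζ)).obj ((P.map ζ).obj ((P.map η).obj ((P.map ξ).obj
          ((P.inv ξ).obj ((P.inv η).obj ((P.map (ξ ≫ η)).obj a))))))) by simp),
    omega_congr C η ζ
      (show (P.inv η).obj ((P.map (ξ ≫ η)).obj a) =
        (P.map ξ).obj ((P.inv ξ).obj ((P.inv η).obj ((P.map (ξ ≫ η)).obj a))) by simp)]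
  simp only [Category.assoc, IsIso.inv_comp, inv_eqToHom, Functor.map_comp, eqToHom_map,
    eqToHom_trans, eqToHom_trans_assoc, eqToHom_refl, Category.comp_id, Category.id_comp]

lemma cyclic {M : A ⥤ A} (f : 𝟭 A ⟶ M) (g : M ⟶ 𝟭 A) (b : A) :
    g.app b ≫ f.app b = (f ≫ g).app (M.obj b) := by
  rw [← cancel_mono (g.app b)]
  have h := (f ≫ g).naturality (g.app b)
  simp only [NatTrans.comp_app, Functor.id_map] at h
  simpa using h

lemma conj {M : A ⥤ A} (f : 𝟭 A ⟶ M) (g : M ⟶ 𝟭 A) {a b : A} (h : a = M.obj b) :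
    eqToHom h ≫ (g.app b ≫ f.app b) ≫ eqToHom h.symm = (f ≫ g).app a := by
  rw [cyclic]
  have h2 := (f ≫ g).naturality (eqToHom h)
  simp only [Functor.id_map] at h2
  rw [← Category.assoc, h2]
  simp

lemma Xi_eq_Xi₁ (a : A) : Xi C ξ η ζ a = Xi₁ C ξ η ζ a := by
  have h : a = (F1 (P := P) ξ η).obj
      ((P.inv ξ).obj ((P.inv η).obj ((P.map (ξ ≫ η)).obj a))) := by simp
  calc Xi C ξ η ζ a = (T C ξ η ζ).app a := Xi_eq_T C ξ η ζ a
    _ = (omegaNat C ξ η ≫ B1 C ξ η ζ).app a := rfl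
    _ = eqToHom h ≫ ((B1 C ξ η ζ).app _ ≫ (omegaNat C ξ η).app _) ≫ eqToHom h.symm :=
        (conj _ _ h).symm
    _ = Xi₁ C ξ η ζ a := (book1 C ξ η ζ a h).symm

noncomputable def Fr2 : 𝟭 A ⟶ F1 (P := P) ξ η ⋙ F2 (P := P) ξ η ζ :=
  omegaNat C ξ η ≫ u2 C ξ η ζ

noncomputable def B2 : F1 (P := P) ξ η ⋙ F2 (P := P) ξ η ζ ⟶ 𝟭 A :=
  eqToHom (keyEq ξ η ζ) ≫ u4 C ξ η ζ ≫ u5 C ξ η ζ ≫ eqToHom (P.comp_inv ξ)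

lemma T_eq2 : T C ξ η ζ = Fr2 C ξ η ζ ≫ B2 C ξ η ζ := by
  simp [T, B1, Fr2, B2]

lemma book2 (a : A)
    (h : a = (F1 (P := P) ξ η ⋙ F2 (P := P) ξ η ζ).obj
        ((P.inv ξ).obj ((P.inv η).obj ((P.inv ζ).obj ((P.map (ξ ≫ η ≫ ζ)).obj a))))) :
    Xi₂ C ξ η ζ a =
      eqToHom h ≫
        ((B2 C ξ η ζ).app
            ((P.inv ξ).obj ((P.inv η).obj ((P.inv ζ).obj ((P.map (ξ ≫ η ≫ ζ)).obj a)))) ≫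
          (Fr2 C ξ η ζ).app
            ((P.inv ξ).obj ((P.inv η).obj ((P.inv ζ).obj ((P.map (ξ ≫ η ≫ ζ)).obj a))))) ≫
        eqToHom h.symm := by
  simp only [B2, Fr2, u2, u4, u5, NatTrans.comp_app, eqToHom_app, Functor.whiskerLeft_app,
    Functor.whiskerRight_app, Functor.rightUnitor_inv_app, NatIso.isIso_inv_app, Category.id_comp,
    omegaNat, Xi₂, Groupoid.inv_eq_inv, Functor.comp_obj, Functor.id_obj]
  rw [omega_congr C ξ (η ≫ ζ)
      (show (P.inv ξ).obj ((P.inv (η ≫ ζ)).obj ((P.map (ξ ≫ η ≫ ζ)).obj a)) =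
        (P.inv ξ).obj ((P.inv (η ≫ ζ)).obj ((P.map ζ).obj ((P.map η).obj ((P.map ξ).obj
          ((P.inv ξ).obj ((P.inv η).obj ((P.inv ζ).obj ((P.map (ξ ≫ η ≫ ζ)).obj a))))))))
        by simp),
    omega_congr C η ζ
      (show (P.inv η).obj ((P.inv ζ).obj ((P.map (ξ ≫ η ≫ ζ)).obj a)) =
        (P.map ξ).obj ((P.inv ξ).obj ((P.inv η).obj ((P.inv ζ).obj
          ((P.map (ξ ≫ η ≫ ζ)).obj a)))) by simp),
    omega_congr C (ξ ≫ η) ζ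
      (show (P.inv (ξ ≫ η)).obj ((P.inv ζ).obj ((P.map (ξ ≫ η ≫ ζ)).obj a)) =
        (P.inv (ξ ≫ η)).obj ((P.map η).obj ((P.map ξ).obj ((P.inv ξ).obj ((P.inv η).obj
          ((P.inv ζ).obj ((P.map (ξ ≫ η ≫ ζ)).obj a)))))) by simp)]
  simp only [Category.assoc, IsIso.inv_comp, inv_eqToHom, Functor.map_comp, eqToHom_map,
    eqToHom_trans, eqToHom_trans_assoc, eqToHom_refl, Category.comp_id, Category.id_comp]

lemma Xi_eq_Xi₂ (a : A) : Xi C ξ η ζ a = Xi₂ C ξ η ζ a := by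
  have h : a = (F1 (P := P) ξ η ⋙ F2 (P := P) ξ η ζ).obj
      ((P.inv ξ).obj ((P.inv η).obj ((P.inv ζ).obj ((P.map (ξ ≫ η ≫ ζ)).obj a)))) := by simp
  calc Xi C ξ η ζ a = (T C ξ η ζ).app a := Xi_eq_T C ξ η ζ a
    _ = (Fr2 C ξ η ζ ≫ B2 C ξ η ζ).app a := by rw [T_eq2]
    _ = eqToHom h ≫ ((B2 C ξ η ζ).app _ ≫ (Fr2 C ξ η ζ).app _) ≫ eqToHom h.symm :=
        (conj _ _ h).symm
    _ = Xi₂ C ξ η ζ a := (book2 C ξ η ζ a h).symm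

noncomputable def Fr3 : 𝟭 A ⟶ Q (P := P) ξ η ζ :=
  omegaNat C ξ η ≫ u2 C ξ η ζ ≫ eqToHom (keyEq ξ η ζ) ≫ u4 C ξ η ζ

noncomputable def B3 : Q (P := P) ξ η ζ ⟶ 𝟭 A :=
  u5 C ξ η ζ ≫ eqToHom (P.comp_inv ξ)

lemma T_eq3 : T C ξ η ζ = Fr3 C ξ η ζ ≫ B3 C ξ η ζ := by
  simp [T, B1, Fr3, B3]

lemma book3 (a : A)
    (h : a = (Q (P := P) ξ η ζ).obj
        ((P.inv ξ).obj ((P.inv η).obj ((P.inv ζ).obj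
          ((P.map (η ≫ ζ)).obj ((P.map ξ).obj a)))))) :
    Xi₃ C ξ η ζ a =
      eqToHom h ≫
        ((B3 C ξ η ζ).app
            ((P.inv ξ).obj ((P.inv η).obj ((P.inv ζ).obj
              ((P.map (η ≫ ζ)).obj ((P.map ξ).obj a))))) ≫
          (Fr3 C ξ η ζ).app
            ((P.inv ξ).obj ((P.inv η).obj ((P.inv ζ).obj
              ((P.map (η ≫ ζ)).obj ((P.map ξ).obj a)))))) ≫
        eqToHom h.symm := by
  simp only [B3, Fr3, u2, u4, u5, NatTrans.comp_app, eqToHom_app, Functor.whiskerLeft_app,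
    Functor.whiskerRight_app, Functor.rightUnitor_inv_app, NatIso.isIso_inv_app, Category.id_comp,
    omegaNat, Xi₃, Groupoid.inv_eq_inv, Functor.comp_obj, Functor.id_obj]
  rw [omega_congr C η ζ
      (show (P.inv η).obj ((P.inv ζ).obj ((P.map (η ≫ ζ)).obj ((P.map ξ).obj a))) =
        (P.map ξ).obj ((P.inv ξ).obj ((P.inv η).obj ((P.inv ζ).obj
          ((P.map (η ≫ ζ)).obj ((P.map ξ).obj a))))) by simp),
    omega_congr C (ξ ≫ η) ζ
      (show (P.inv (ξ ≫ η)).obj ((P.inv ζ).obj ((P.map (η ≫ ζ)).obj ((P.map ξ).obj a))) =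
        (P.inv (ξ ≫ η)).obj ((P.map η).obj ((P.map ξ).obj ((P.inv ξ).obj ((P.inv η).obj
          ((P.inv ζ).obj ((P.map (η ≫ ζ)).obj ((P.map ξ).obj a))))))) by simp),
    omega_congr C ξ (η ≫ ζ)
      (show a =
        (P.inv ξ).obj ((P.inv (η ≫ ζ)).obj ((P.map ζ).obj ((P.map η).obj ((P.map ξ).obj
          ((P.inv ξ).obj ((P.inv η).obj ((P.inv ζ).obj
            ((P.map (η ≫ ζ)).obj ((P.map ξ).obj a))))))))) by simp)]
  simp only [Category.assoc, IsIso.inv_comp, inv_eqToHom, Functor.map_comp, eqToHom_map,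
    eqToHom_trans, eqToHom_trans_assoc, eqToHom_refl, Category.comp_id, Category.id_comp]

lemma Xi_eq_Xi₃ (a : A) : Xi C ξ η ζ a = Xi₃ C ξ η ζ a := by
  have h : a = (Q (P := P) ξ η ζ).obj
      ((P.inv ξ).obj ((P.inv η).obj ((P.inv ζ).obj
        ((P.map (η ≫ ζ)).obj ((P.map ξ).obj a))))) := by simp
  calc Xi C ξ η ζ a = (T C ξ η ζ).app a := Xi_eq_T C ξ η ζ a
    _ = (Fr3 C ξ η ζ ≫ B3 C ξ η ζ).app a := by rw [T_eq3]
    _ = eqToHom h ≫ ((B3 C ξ η ζ).app _ ≫ (Fr3 C ξ η ζ).app _) ≫ eqToHom h.symm :=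
        (conj _ _ h).symm
    _ = Xi₃ C ξ η ζ a := (book3 C ξ η ζ a h).symm

end
end XiAux

/-- The cyclic permutations `Ξ₁, Ξ₂, Ξ₃` of the factors of `Ξ`
all agree with `Ξ`. -/
theorem Xi_cyclic_permutations (P : PreAction K A) (C : Cofactor P) :
    ∀ {x y z w : K} (ξ : x ⟶ y) (η : y ⟶ z) (ζ : z ⟶ w) (a : A),
      Xi C ξ η ζ a = Xi₁ C ξ η ζ a ∧
      Xi C ξ η ζ a = Xi₂ C ξ η ζ a ∧
      Xi C ξ η ζ a = Xi₃ C ξ η ζ a := by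
  intro x y z w ξ η ζ a
  exact ⟨XiAux.Xi_eq_Xi₁ C ξ η ζ a, XiAux.Xi_eq_Xi₂ C ξ η ζ a, XiAux.Xi_eq_Xi₃ C ξ η ζ a⟩
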